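/- The 3×3 matrix A = [[0,1,1],[2,0,1],[-4,-5,0]] is a semimonotone star matrix, but its principal submatrix [[0,1],[2,0]] (rows and columns 1,2) is not a semimonotone star matrix. Thus the class E_0^s is not closed under taking principal submatrices. -/

import Mathlib

/-- A is semimonotone (E₀). -/
def IsSemimonotone {n : ℕ} (A : Matrix (Fin n) (Fin n) ℝ) : Prop :=
  ∀ x : Fin n → ℝ, 0 ≤ x → x ≠ 0 → ∃ i, 0 < x i ∧ 0 ≤ A.mulVec x i

/-- A is semimonotone star (E₀ˢ). -/
def IsSemimonotoneStar {n : ℕ} (A : Matrix (Fin n) (Fin n) ℝ) : Prop :=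
  IsSemimonotone A ∧
    ∀ x : Fin n → ℝ, 0 ≤ x → 0 ≤ A.mulVec x → dotProduct x (A.mulVec x) = 0 →
      A.transpose.mulVec x ≤ 0

theorem stmt6 :
    IsSemimonotoneStar !![(0 : ℝ), 1, 1; 2, 0, 1; -4, -5, 0] ∧
      ¬ IsSemimonotoneStar !![(0 : ℝ), 1; 2, 0] := by
  constructor
  · constructor
    · intro x hx hne
      have h0 : 0 ≤ x 0 := hx 0
      have h1 : 0 ≤ x 1 := hx 1
      have h2 : 0 ≤ x 2 := hx 2
      rcases h0.lt_or_eq with h0' | h0'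
      · refine ⟨0, h0', ?_⟩
        simp [Matrix.mulVec, dotProduct, Fin.sum_univ_three]
        linarith
      · rcases h1.lt_or_eq with h1' | h1'
        · refine ⟨1, h1', ?_⟩
          simp [Matrix.mulVec, dotProduct, Fin.sum_univ_three]
          linarith
        · rcases h2.lt_or_eq with h2' | h2'
          · refine ⟨2, h2', ?_⟩
            simp [Matrix.mulVec, dotProduct, Fin.sum_univ_three]
            linarith
          · exact absurd (show x = 0 from funext fun i => by
              fin_cases i <;> simp [← h0', ← h1', ← h2']) hne
    · intro x hx hAx _
      have h0 : 0 ≤ x 0 := hx 0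
      have h1 : 0 ≤ x 1 := hx 1
      have h2 : 0 ≤ x 2 := hx 2
      have ha2 := hAx 2
      simp [Matrix.mulVec, dotProduct, Fin.sum_univ_three] at ha2
      intro i
      fin_cases i <;>
        simp [Matrix.mulVec, dotProduct, Fin.sum_univ_three, Matrix.transpose] <;>
        linarith
  · rintro ⟨_, hstar⟩
    have hx : (0 : Fin 2 → ℝ) ≤ ![1, 0] := by
      intro i; fin_cases i <;> norm_num
    have hAx : 0 ≤ (!![(0 : ℝ), 1; 2, 0]).mulVec ![1, 0] := by
      intro i; fin_cases i <;>
        simp [Matrix.mulVec, dotProduct, Fin.sum_univ_two]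
    have hdot : dotProduct ![1, 0] ((!![(0 : ℝ), 1; 2, 0]).mulVec ![1, 0]) = 0 := by
      simp [Matrix.mulVec, dotProduct, Fin.sum_univ_two]
    have := hstar ![1, 0] hx hAx hdot 1
    simp [Matrix.mulVec, dotProduct, Fin.sum_univ_two, Matrix.transpose] at this
    linarith
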